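/- Let n ≥ 1, T ≥ 1, and let c = (c_{ij}), l = (l_{ij}) be nonnegative with c_max := max_{i,j} c_{ij}, l_max := max_{i,j} l_{ij}, and c_max + l_max > 0. Let d₁,…,d_T ∈ [0,1]^n and let P₁,…,P_T ∈ [0,1]^{n×n} be row-stochastic. Fix x₁ ∈ Δ_{n−1}. For S ∈ Δ_{n−1} define the base-stock trajectory x₁^S = x₁ and x_{t+1}^S = (S − d_t)^+ + P_tᵀ min(S, d_t) for t = 1,…,T. For t = 1,…,T define the surrogate cost f_t(y) = M_c(min(y,d_t) − P_tᵀ min(y,d_t)) − ∑_{i,j=1}^n l_{ij} P_{t,ij} min(d_{t,i}, y_i). Let S₁ ∈ Δ_{n−1}, and suppose for each t = 1,…,T: g_t ∈ ℝ^n satisfies ‖g_t‖₂ ≤ n²(c_max + l_max) and f_t(y) ≥ f_t(S_t) + ⟨g_t, y − S_t⟩ for all y ∈ Δ_{n−1}; and S_{t+1} ∈ Δ_{n−1} satisfies ‖S_{t+1} − (S_t − η_t g_t)‖₂ ≤ ‖z − (S_t − η_t g_t)‖₂ for all z ∈ Δ_{n−1}, where η_t = 2/(n²(c_max + l_max)√t).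 Define the algorithm trajectory x₁^{alg} = x₁ and x_{t+1}^{alg} = (S_t − d_t)^+ + P_tᵀ min(S_t, d_t). Then for every S ∈ Δ_{n−1}: ∑_{t=1}^T C̃(x_t^{alg}, S_t, d_t, P_t) − ∑_{t=1}^T C̃(x_t^S, S, d_t, P_t) ≤ 20 · n^{5/2} · (1 + c_max + l_max)² · √T. -/

import Mathlib

/-- The repositioning cost `M_c(v)`: the minimum-cost network flow achieving net change `v`. -/
noncomputable def repoCost {n : ℕ} (c : Fin n → Fin n → ℝ) (v : Fin n → ℝ) : ℝ :=
  sInf {r : ℝ | ∃ ξ : Fin n → Fin n → ℝ, (∀ i j, 0 ≤ ξ i j) ∧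
    (∀ j, (∑ i, ξ i j) - (∑ k, ξ j k) = v j) ∧ r = ∑ i, ∑ j, c i j * ξ i j}

/-- The Euclidean (ℓ²) norm on `ℝ^n`. -/
noncomputable def l2Norm {n : ℕ} (v : Fin n → ℝ) : ℝ := Real.sqrt (∑ i, (v i) ^ 2)

/-- `P` is a row-stochastic matrix with entries in `[0,1]`. -/
def RowStochastic {n : ℕ} (P : Fin n → Fin n → ℝ) : Prop :=
  (∀ i j, 0 ≤ P i j ∧ P i j ≤ 1) ∧ ∀ i, (∑ j, P i j) = 1

/-- The modified one-period cost
`C̃(x, y, d, P) = M_c(y − x) − ∑_{i,j} l_{ij} P_{ij} min(d_i, y_i)`. -/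
noncomputable def Ctilde {n : ℕ} (c l : Fin n → Fin n → ℝ)
    (x y d : Fin n → ℝ) (P : Fin n → Fin n → ℝ) : ℝ :=
  repoCost c (fun i => y i - x i) - ∑ i, ∑ j, l i j * P i j * min (d i) (y i)

/-- The surrogate cost
`f(y) = M_c(min(y,d) − Pᵀ min(y,d)) − ∑_{i,j} l_{ij} P_{ij} min(d_i, y_i)`. -/
noncomputable def surr {n : ℕ} (c l : Fin n → Fin n → ℝ)
    (d : Fin n → ℝ) (P : Fin n → Fin n → ℝ) (y : Fin n → ℝ) : ℝ :=
  repoCost c (fun j => min (y j) (d j) - ∑ i, P i j * min (y i) (d i))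
    - ∑ i, ∑ j, l i j * P i j * min (d i) (y i)


open Finset
open scoped RealInnerProductSpace

def repoSet {n : ℕ} (c : Fin n → Fin n → ℝ) (v : Fin n → ℝ) : Set ℝ :=
  {r : ℝ | ∃ ξ : Fin n → Fin n → ℝ, (∀ i j, 0 ≤ ξ i j) ∧
    (∀ j, (∑ i, ξ i j) - (∑ k, ξ j k) = v j) ∧ r = ∑ i, ∑ j, c i j * ξ i j}

lemma repoCost_eq {n : ℕ} (c : Fin n → Fin n → ℝ) (v : Fin n → ℝ) :
    repoCost c v = sInf (repoSet c v) := rfl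

lemma repoSet_nonneg {n : ℕ} (c : Fin n → Fin n → ℝ) (hc : ∀ i j, 0 ≤ c i j)
    (v : Fin n → ℝ) : ∀ r ∈ repoSet c v, 0 ≤ r := by
  rintro r ⟨ξ, hξ, -, rfl⟩
  exact Finset.sum_nonneg fun i _ => Finset.sum_nonneg fun j _ =>
    mul_nonneg (hc i j) (hξ i j)

lemma repoSet_bddBelow {n : ℕ} (c : Fin n → Fin n → ℝ) (hc : ∀ i j, 0 ≤ c i j)
    (v : Fin n → ℝ) : BddBelow (repoSet c v) :=
  ⟨0, fun r hr => repoSet_nonneg c hc v r hr⟩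

lemma repoCost_nonneg {n : ℕ} (c : Fin n → Fin n → ℝ) (hc : ∀ i j, 0 ≤ c i j)
    (v : Fin n → ℝ) : 0 ≤ repoCost c v :=
  Real.sInf_nonneg (repoSet_nonneg c hc v)

def hubFlow {n : ℕ} (hub : Fin n) (v : Fin n → ℝ) : Fin n → Fin n → ℝ := fun i j =>
  (if i = hub then max (v j) 0 else 0) + (if j = hub then max (-(v i)) 0 else 0)

lemma max_sub_max (x : ℝ) : max x 0 - max (-x) 0 = x := by
  rcases le_or_gt 0 x with h | h
  · rw [max_eq_left h, max_eq_right (neg_nonpos.mpr h)]; ring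
  · rw [max_eq_right h.le, max_eq_left (by linarith)]; ring

lemma max_add_max (x : ℝ) : max x 0 + max (-x) 0 = |x| := by
  rcases le_or_gt 0 x with h | h
  · rw [max_eq_left h, max_eq_right (neg_nonpos.mpr h), abs_of_nonneg h]; ring
  · rw [max_eq_right h.le, max_eq_left (by linarith), abs_of_neg h]; ring

lemma hub_mem {n : ℕ} (c : Fin n → Fin n → ℝ) (hc : ∀ i j, 0 ≤ c i j)
    (hn : 0 < n) (v : Fin n → ℝ) (hv : ∑ j, v j = 0) (cmax : ℝ)
    (hcb : ∀ i j, c i j ≤ cmax) :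
    ∃ r ∈ repoSet c v, r ≤ cmax * ∑ i, |v i| := by
  have hub : Fin n := ⟨0, hn⟩
  have hnn : ∀ i j, 0 ≤ hubFlow hub v i j := fun i j => by
    unfold hubFlow; positivity
  have h1 : ∀ j, (∑ i, hubFlow hub v i j)
      = max (v j) 0 + (if j = hub then ∑ i, max (-(v i)) 0 else 0) := by
    intro j
    unfold hubFlow
    rw [Finset.sum_add_distrib]
    congr 1
    · simp
    · split <;> simp
  have h2 : ∀ j, (∑ k, hubFlow hub v j k)
      = (if j = hub then ∑ k, max (v k) 0 else 0) + max (-(v j)) 0 := by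
    intro j
    unfold hubFlow
    rw [Finset.sum_add_distrib]
    congr 1
    · split <;> simp
    · simp
  have hdiv : ∀ j, (∑ i, hubFlow hub v i j) - (∑ k, hubFlow hub v j k) = v j := by
    intro j
    rw [h1, h2]
    have key := max_sub_max (v j)
    have hsplit : ∑ i, max (-(v i)) 0 - ∑ k, max (v k) 0 = 0 := by
      rw [← Finset.sum_sub_distrib]
      have : ∀ i, max (-(v i)) 0 - max (v i) 0 = -(v i) := by
        intro i; have := max_sub_max (-(v i)); simpa using this
      rw [Finset.sum_congr rfl fun i _ => this i, Finset.sum_neg_distrib, hv, neg_zero]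
    by_cases hj : j = hub
    · rw [if_pos hj, if_pos hj]; linarith
    · rw [if_neg hj, if_neg hj]; linarith
  refine ⟨∑ i, ∑ j, c i j * hubFlow hub v i j, ⟨hubFlow hub v, hnn, hdiv, rfl⟩, ?_⟩
  have hcm0 : 0 ≤ cmax := le_trans (hc hub hub) (hcb hub hub)
  calc ∑ i, ∑ j, c i j * hubFlow hub v i j
      ≤ ∑ i, ∑ j, cmax * hubFlow hub v i j :=
        Finset.sum_le_sum fun i _ => Finset.sum_le_sum fun j _ =>
          mul_le_mul_of_nonneg_right (hcb i j) (hnn i j)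
    _ = cmax * ∑ i, ∑ j, hubFlow hub v i j := by simp_rw [← Finset.mul_sum]
    _ ≤ cmax * ∑ i, |v i| := by
        refine mul_le_mul_of_nonneg_left (le_of_eq ?_) hcm0
        have : ∑ i, ∑ j, hubFlow hub v i j
            = (∑ j, max (v j) 0) + ∑ i, max (-(v i)) 0 := by
          unfold hubFlow
          rw [Finset.sum_comm]
          calc ∑ j, ∑ i, ((if i = hub then max (v j) 0 else 0)
                + (if j = hub then max (-(v i)) 0 else 0))
              = ∑ j, (max (v j) 0 + (if j = hub then ∑ i, max (-(v i)) 0 else 0)) := by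
                refine Finset.sum_congr rfl fun j _ => ?_
                rw [Finset.sum_add_distrib]
                congr 1
                · simp
                · split <;> simp
            _ = (∑ j, max (v j) 0) + ∑ i, max (-(v i)) 0 := by
                rw [Finset.sum_add_distrib]
                congr 1
                simp
        rw [this, ← Finset.sum_add_distrib]
        exact Finset.sum_congr rfl fun i _ => max_add_max (v i)

lemma repoSet_nonempty {n : ℕ} (c : Fin n → Fin n → ℝ) (hc : ∀ i j, 0 ≤ c i j)
    (hn : 0 < n) (v : Fin n → ℝ) (hv : ∑ j, v j = 0) (cmax : ℝ)
    (hcb : ∀ i j, c i j ≤ cmax) : (repoSet c v).Nonempty := by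
  obtain ⟨r, hr, -⟩ := hub_mem c hc hn v hv cmax hcb
  exact ⟨r, hr⟩

lemma repoCost_le_l1 {n : ℕ} (c : Fin n → Fin n → ℝ) (hc : ∀ i j, 0 ≤ c i j)
    (hn : 0 < n) (v : Fin n → ℝ) (hv : ∑ j, v j = 0) (cmax : ℝ)
    (hcb : ∀ i j, c i j ≤ cmax) : repoCost c v ≤ cmax * ∑ i, |v i| := by
  obtain ⟨r, hr, hrle⟩ := hub_mem c hc hn v hv cmax hcb
  exact le_trans (csInf_le (repoSet_bddBelow c hc v) hr) hrle

lemma repoCost_add_le {n : ℕ} (c : Fin n → Fin n → ℝ) (hc : ∀ i j, 0 ≤ c i j)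
    (hn : 0 < n) (u v : Fin n → ℝ) (hu : ∑ j, u j = 0) (hv : ∑ j, v j = 0)
    (cmax : ℝ) (hcb : ∀ i j, c i j ≤ cmax) :
    repoCost c (fun j => u j + v j) ≤ repoCost c u + repoCost c v := by
  have hA := repoSet_nonempty c hc hn u hu cmax hcb
  have hB := repoSet_nonempty c hc hn v hv cmax hcb
  have key : ∀ a ∈ repoSet c u, ∀ b ∈ repoSet c v,
      repoCost c (fun j => u j + v j) ≤ a + b := by
    rintro a ⟨ξ, hξn, hξd, rfl⟩ b ⟨ζ, hζn, hζd, rfl⟩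
    refine csInf_le (repoSet_bddBelow c hc _) ⟨fun i j => ξ i j + ζ i j,
      fun i j => add_nonneg (hξn i j) (hζn i j), fun j => ?_, ?_⟩
    · show (∑ i, (ξ i j + ζ i j)) - (∑ k, (ξ j k + ζ j k)) = u j + v j
      rw [Finset.sum_add_distrib, Finset.sum_add_distrib]
      linarith [hξd j, hζd j]
    · rw [← Finset.sum_add_distrib]
      refine Finset.sum_congr rfl fun i _ => ?_
      rw [← Finset.sum_add_distrib]
      exact Finset.sum_congr rfl fun j _ => by ring
  have step1 : ∀ a ∈ repoSet c u, repoCost c (fun j => u j + v j) - a ≤ repoCost c v := by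
    intro a ha
    refine le_csInf hB fun b hb => ?_
    linarith [key a ha b hb]
  have step2 : repoCost c (fun j => u j + v j) - repoCost c v ≤ repoCost c u := by
    refine le_csInf hA fun a ha => ?_
    linarith [step1 a ha]
  linarith
section Proj
variable {n : ℕ}

noncomputable def toE {n : ℕ} (v : Fin n → ℝ) : EuclideanSpace ℝ (Fin n) :=
  (WithLp.equiv 2 (Fin n → ℝ)).symm v

lemma toE_norm (v : Fin n → ℝ) : ‖toE v‖ = l2Norm v := by
  rw [EuclideanSpace.norm_eq, l2Norm]
  congr 1
  exact Finset.sum_congr rfl fun i _ => by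
    rw [Real.norm_eq_abs, sq_abs]; rfl

lemma toE_sub (v w : Fin n → ℝ) : toE v - toE w = toE (fun i => v i - w i) := rfl

def KE (n : ℕ) : Set (EuclideanSpace ℝ (Fin n)) :=
  (WithLp.equiv 2 (Fin n → ℝ)) ⁻¹' (stdSimplex ℝ (Fin n))

lemma KE_convex : Convex ℝ (KE n) := by
  have h := convex_stdSimplex ℝ (Fin n)
  exact h.linear_preimage (WithLp.linearEquiv 2 ℝ (Fin n → ℝ)).toLinearMap

lemma mem_KE {v : Fin n → ℝ} (hv : v ∈ stdSimplex ℝ (Fin n)) : toE v ∈ KE n := hv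

lemma proj_contract (p q s : Fin n → ℝ)
    (hq : q ∈ stdSimplex ℝ (Fin n)) (hs : s ∈ stdSimplex ℝ (Fin n))
    (hmin : ∀ z ∈ stdSimplex ℝ (Fin n),
      l2Norm (fun i => q i - p i) ≤ l2Norm (fun i => z i - p i)) :
    ∑ i, (q i - s i) ^ 2 ≤ ∑ i, (p i - s i) ^ 2 := by
  set u := toE p
  set v := toE q
  set w := toE s
  have hvK : v ∈ KE n := mem_KE hq
  have hwK : w ∈ KE n := mem_KE hs
  have hmin' : ∀ z ∈ KE n, ‖u - v‖ ≤ ‖u - z‖ := by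
    intro z hz
    have h1 : ‖u - v‖ = l2Norm (fun i => q i - p i) := by
      rw [norm_sub_rev, toE_sub, toE_norm]
    have h2 : ‖u - z‖ = l2Norm (fun i => (WithLp.equiv 2 (Fin n → ℝ)) z i - p i) := by
      rw [norm_sub_rev]
      have : z - u = toE (fun i => (WithLp.equiv 2 (Fin n → ℝ)) z i - p i) := rfl
      rw [this, toE_norm]
    rw [h1, h2]
    exact hmin _ hz
  haveI : Nonempty (KE n) := ⟨⟨v, hvK⟩⟩
  have hinf : ‖u - v‖ = ⨅ z : KE n, ‖u - (z : EuclideanSpace ℝ (Fin n))‖ := by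
    refine le_antisymm (le_ciInf fun z => hmin' z z.2) ?_
    exact ciInf_le ⟨0, fun r ⟨z, hz⟩ => hz ▸ norm_nonneg _⟩ (⟨v, hvK⟩ : KE n)
  have hVI := (norm_eq_iInf_iff_real_inner_le_zero KE_convex hvK).mp hinf w hwK
  have hexp : ‖u - w‖ ^ 2 = ‖u - v‖ ^ 2 + 2 * (inner ℝ (u - v) (v - w) : ℝ) + ‖v - w‖ ^ 2 := by
    have h : u - w = (u - v) + (v - w) := by abel
    rw [h, norm_add_sq_real]
  have hinner : (0:ℝ) ≤ (inner ℝ (u - v) (v - w) : ℝ) := by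
    have h : (inner ℝ (u - v) (v - w) : ℝ) = -(inner ℝ (u - v) (w - v) : ℝ) := by
      rw [← inner_neg_right]; congr 1; abel
    rw [h]; linarith
  have hle : ‖v - w‖ ^ 2 ≤ ‖u - w‖ ^ 2 := by
    nlinarith [sq_nonneg ‖u - v‖]
  have e1 : ‖v - w‖ ^ 2 = ∑ i, (q i - s i) ^ 2 := by
    rw [toE_sub, toE_norm, l2Norm, Real.sq_sqrt]
    exact Finset.sum_nonneg fun i _ => sq_nonneg _
  have e2 : ‖u - w‖ ^ 2 = ∑ i, (p i - s i) ^ 2 := by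
    rw [toE_sub, toE_norm, l2Norm, Real.sq_sqrt]
    exact Finset.sum_nonneg fun i _ => sq_nonneg _
  rw [← e1, ← e2]; exact hle

end Proj
-- helper lemmas (to be concatenated)
section Helpers
open Finset

lemma sub_max_eq_min (a b : ℝ) : a - max (a - b) 0 = min a b := by
  rcases le_total a b with h | h
  · rw [max_eq_right (by linarith), min_eq_left h]; ring
  · rw [max_eq_left (by linarith), min_eq_right h]; ring

lemma simplex_nonneg {n : ℕ} {x : Fin n → ℝ} (hx : x ∈ stdSimplex ℝ (Fin n)) :
    ∀ i, 0 ≤ x i := hx.1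

lemma simplex_sum {n : ℕ} {x : Fin n → ℝ} (hx : x ∈ stdSimplex ℝ (Fin n)) :
    ∑ i, x i = 1 := hx.2

lemma simplex_le_one {n : ℕ} {x : Fin n → ℝ} (hx : x ∈ stdSimplex ℝ (Fin n)) :
    ∀ i, x i ≤ 1 := by
  intro i
  calc x i ≤ ∑ j, x j := Finset.single_le_sum (fun j _ => hx.1 j) (Finset.mem_univ i)
    _ = 1 := hx.2

lemma simplex_sub_sum_zero {n : ℕ} {x y : Fin n → ℝ} (hx : x ∈ stdSimplex ℝ (Fin n))
    (hy : y ∈ stdSimplex ℝ (Fin n)) : ∑ i, (x i - y i) = 0 := by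
  rw [Finset.sum_sub_distrib, hx.2, hy.2]; ring

lemma simplex_abs_sub_le_two {n : ℕ} {x y : Fin n → ℝ} (hx : x ∈ stdSimplex ℝ (Fin n))
    (hy : y ∈ stdSimplex ℝ (Fin n)) : ∑ i, |x i - y i| ≤ 2 := by
  calc ∑ i, |x i - y i| ≤ ∑ i, (x i + y i) := by
        refine Finset.sum_le_sum fun i _ => ?_
        have h1 := hx.1 i; have h2 := hy.1 i
        rw [abs_le]; constructor <;> linarith
    _ = 2 := by rw [Finset.sum_add_distrib, hx.2, hy.2]; norm_num

lemma simplex_sq_sub_le_two {n : ℕ} {x y : Fin n → ℝ} (hx : x ∈ stdSimplex ℝ (Fin n))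
    (hy : y ∈ stdSimplex ℝ (Fin n)) : ∑ i, (x i - y i) ^ 2 ≤ 2 := by
  calc ∑ i, (x i - y i) ^ 2 ≤ ∑ i, (x i + y i) := by
        refine Finset.sum_le_sum fun i _ => ?_
        have h1 := hx.1 i; have h2 := hy.1 i
        have h3 := simplex_le_one hx i; have h4 := simplex_le_one hy i
        nlinarith
    _ = 2 := by rw [Finset.sum_add_distrib, hx.2, hy.2]; norm_num

lemma w_sum_zero {n : ℕ} (S₀ d₀ : Fin n → ℝ) (P₀ : Fin n → Fin n → ℝ)
    (hP₀ : ∀ i, ∑ j, P₀ i j = 1) :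
    ∑ j, (min (S₀ j) (d₀ j) - ∑ i, P₀ i j * min (S₀ i) (d₀ i)) = 0 := by
  rw [Finset.sum_sub_distrib]
  have : ∑ j, ∑ i, P₀ i j * min (S₀ i) (d₀ i)
      = ∑ i, min (S₀ i) (d₀ i) := by
    rw [Finset.sum_comm]
    refine Finset.sum_congr rfl fun i _ => ?_
    rw [← Finset.sum_mul, hP₀ i, one_mul]
  rw [this]; ring

lemma w_abs_le_two {n : ℕ} {S₀ d₀ : Fin n → ℝ} {P₀ : Fin n → Fin n → ℝ}
    (hS₀ : S₀ ∈ stdSimplex ℝ (Fin n)) (hd₀ : ∀ i, 0 ≤ d₀ i)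
    (hP₀n : ∀ i j, 0 ≤ P₀ i j) (hP₀ : ∀ i, ∑ j, P₀ i j = 1) :
    ∑ j, |min (S₀ j) (d₀ j) - ∑ i, P₀ i j * min (S₀ i) (d₀ i)| ≤ 2 := by
  have hm0 : ∀ i, 0 ≤ min (S₀ i) (d₀ i) := fun i => le_min (hS₀.1 i) (hd₀ i)
  have hb0 : ∀ j, 0 ≤ ∑ i, P₀ i j * min (S₀ i) (d₀ i) := fun j =>
    Finset.sum_nonneg fun i _ => mul_nonneg (hP₀n i j) (hm0 i)
  have hmsum : ∑ i, min (S₀ i) (d₀ i) ≤ 1 := by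
    calc ∑ i, min (S₀ i) (d₀ i) ≤ ∑ i, S₀ i :=
          Finset.sum_le_sum fun i _ => min_le_left _ _
      _ = 1 := hS₀.2
  have hbsum : ∑ j, ∑ i, P₀ i j * min (S₀ i) (d₀ i) ≤ 1 := by
    have : ∑ j, ∑ i, P₀ i j * min (S₀ i) (d₀ i) = ∑ i, min (S₀ i) (d₀ i) := by
      rw [Finset.sum_comm]
      refine Finset.sum_congr rfl fun i _ => ?_
      rw [← Finset.sum_mul, hP₀ i, one_mul]
    rw [this]; exact hmsum
  calc ∑ j, |min (S₀ j) (d₀ j) - ∑ i, P₀ i j * min (S₀ i) (d₀ i)|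
      ≤ ∑ j, (min (S₀ j) (d₀ j) + ∑ i, P₀ i j * min (S₀ i) (d₀ i)) := by
        refine Finset.sum_le_sum fun j _ => ?_
        have := hm0 j; have := hb0 j
        rw [abs_le]; constructor <;> linarith
    _ = (∑ j, min (S₀ j) (d₀ j)) + ∑ j, ∑ i, P₀ i j * min (S₀ i) (d₀ i) :=
        Finset.sum_add_distrib
    _ ≤ 2 := by linarith

lemma l2Norm_nonneg {n : ℕ} (v : Fin n → ℝ) : 0 ≤ l2Norm v := Real.sqrt_nonneg _

lemma l2Norm_sq {n : ℕ} (v : Fin n → ℝ) : (l2Norm v) ^ 2 = ∑ i, (v i) ^ 2 :=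
  Real.sq_sqrt (Finset.sum_nonneg fun i _ => sq_nonneg _)

lemma l2Norm_triangle {n : ℕ} (u v : Fin n → ℝ) :
    l2Norm (fun i => u i + v i) ≤ l2Norm u + l2Norm v := by
  rw [← toE_norm, ← toE_norm, ← toE_norm]
  have h : toE (fun i => u i + v i) = toE u + toE v := rfl
  rw [h]; exact norm_add_le _ _

lemma l2Norm_smul {n : ℕ} (aa : ℝ) (v : Fin n → ℝ) :
    l2Norm (fun i => aa * v i) = |aa| * l2Norm v := by
  unfold l2Norm
  rw [← Real.sqrt_sq_eq_abs, ← Real.sqrt_mul (sq_nonneg aa)]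
  congr 1
  rw [Finset.mul_sum]
  exact Finset.sum_congr rfl fun i _ => by ring

lemma l1_le_sqrt_l2 {n : ℕ} (v : Fin n → ℝ) :
    ∑ i, |v i| ≤ Real.sqrt n * l2Norm v := by
  have h := Finset.sum_mul_sq_le_sq_mul_sq Finset.univ (fun _ => (1:ℝ)) (fun i => |v i|)
  simp only [one_mul, one_pow, sq_abs] at h
  have h2 : (∑ i, |v i|) ^ 2 ≤ (n:ℝ) * ∑ i, (v i) ^ 2 := by
    simpa [Finset.card_univ] using h
  have h3 : (0:ℝ) ≤ ∑ i, |v i| := Finset.sum_nonneg fun i _ => abs_nonneg _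
  calc ∑ i, |v i| = Real.sqrt ((∑ i, |v i|) ^ 2) := (Real.sqrt_sq h3).symm
    _ ≤ Real.sqrt ((n:ℝ) * ∑ i, (v i) ^ 2) := Real.sqrt_le_sqrt h2
    _ = Real.sqrt n * l2Norm v := by
        rw [Real.sqrt_mul (Nat.cast_nonneg n)]; rfl

lemma tele_le (RA RW B : ℕ → ℝ) (T₀ : ℕ)
    (hstep : ∀ s, 1 ≤ s → s + 1 ≤ T₀ → RA (s + 1) ≤ B s + RW s) :
    ∀ T, 1 ≤ T → T ≤ T₀ →
      ∑ t ∈ Finset.Icc 1 T, (RA t - RW t)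
        ≤ RA 1 - RW T + ∑ s ∈ Finset.Icc 1 (T - 1), B s := by
  intro T
  induction T with
  | zero => omega
  | succ T ih =>
    intro h1 h2
    rcases Nat.eq_zero_or_pos T with rfl | hT
    · simp
    · have ihT := ih hT (by omega)
      rw [Finset.sum_Icc_succ_top (by omega)]
      have hs := hstep T hT h2
      have hsum : ∑ s ∈ Finset.Icc 1 (T + 1 - 1), B s
          = ∑ s ∈ Finset.Icc 1 (T - 1), B s + B T := by
        have hT' : T - 1 + 1 = T := by omega
        rw [show T + 1 - 1 = T by omega, ← hT', Finset.sum_Icc_succ_top (by omega), hT']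
      rw [hsum]
      linarith

lemma tele_eq (RA RW : ℕ → ℝ) (T₀ : ℕ)
    (hstep : ∀ s, 1 ≤ s → s + 1 ≤ T₀ → RA (s + 1) = RW s) :
    ∀ T, 1 ≤ T → T ≤ T₀ →
      ∑ t ∈ Finset.Icc 1 T, (RA t - RW t) = RA 1 - RW T := by
  intro T
  induction T with
  | zero => omega
  | succ T ih =>
    intro h1 h2
    rcases Nat.eq_zero_or_pos T with rfl | hT
    · simp
    · have ihT := ih hT (by omega)
      rw [Finset.sum_Icc_succ_top (by omega), ihT, hstep T hT h2]
      ring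

end Helpers

lemma abel_sum (b a : ℕ → ℝ) (hb : ∀ t, 0 ≤ b t) (hbm : ∀ t, b t ≤ b (t + 1))
    (ha0 : ∀ t, 0 ≤ a t) (ha2 : ∀ t, a t ≤ 2) :
    ∀ T, 1 ≤ T → ∑ t ∈ Finset.Icc 1 T, b t * (a t - a (t + 1)) + b T * a (T + 1) ≤ 2 * b T := by
  intro T hT
  induction T with
  | zero => omega
  | succ T ih =>
    rcases Nat.eq_or_lt_of_le hT with h1 | h1
    · simp [← h1]
      nlinarith [hb 1, ha0 2, ha2 1]
    · have hT1 : 1 ≤ T := by omega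
      have ihT := ih hT1
      rw [Finset.sum_Icc_succ_top (by omega)]
      have h2 : b T ≤ b (T + 1) := hbm T
      nlinarith [ha0 (T + 1), ha2 (T + 1), ha0 (T + 2), ha2 (T + 2), hb (T + 1)]

lemma sqrt_sum_le : ∀ T : ℕ, ∑ t ∈ Finset.Icc 1 T, 1 / Real.sqrt t ≤ 2 * Real.sqrt T := by
  intro T
  induction T with
  | zero => simp
  | succ T ih =>
    rw [Finset.sum_Icc_succ_top (by omega)]
    have hy : (0:ℝ) < Real.sqrt (T + 1) := by
      apply Real.sqrt_pos.mpr; positivity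
    have hx : (0:ℝ) ≤ Real.sqrt T := Real.sqrt_nonneg _
    have hx2 : (Real.sqrt T) ^ 2 = (T:ℝ) := Real.sq_sqrt (by positivity)
    have hy2 : (Real.sqrt (T + 1 : ℕ)) ^ 2 = ((T:ℝ) + 1) := by
      push_cast
      exact Real.sq_sqrt (by positivity)
    have key : 2 * Real.sqrt T + 1 / Real.sqrt (T + 1 : ℕ) ≤ 2 * Real.sqrt (T + 1 : ℕ) := by
      have hy' : (0:ℝ) < Real.sqrt (T + 1 : ℕ) := by push_cast; exact hy
      have hinv : 1 / Real.sqrt (T + 1 : ℕ) * Real.sqrt (T + 1 : ℕ) = 1 :=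
        one_div_mul_cancel (ne_of_gt hy')
      nlinarith [sq_nonneg (Real.sqrt T - Real.sqrt (T + 1 : ℕ)), hy2, hx2, hinv, hy', hx]
    calc ∑ t ∈ Finset.Icc 1 T, 1 / Real.sqrt t + 1 / Real.sqrt (T + 1 : ℕ)
        ≤ 2 * Real.sqrt T + 1 / Real.sqrt (T + 1 : ℕ) := by
          have := ih; gcongr
      _ ≤ 2 * Real.sqrt (T + 1 : ℕ) := key
theorem stmt6 (n T : ℕ) (hn : 1 ≤ n) (hT : 1 ≤ T)
    (c l : Fin n → Fin n → ℝ)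
    (hc : ∀ i j, 0 ≤ c i j) (hl : ∀ i j, 0 ≤ l i j)
    (cmax lmax : ℝ)
    (hcmax : IsGreatest {x : ℝ | ∃ i j, x = c i j} cmax)
    (hlmax : IsGreatest {x : ℝ | ∃ i j, x = l i j} lmax)
    (hpos : 0 < cmax + lmax)
    (d : ℕ → Fin n → ℝ) (P : ℕ → Fin n → Fin n → ℝ)
    (hd : ∀ t, 1 ≤ t → t ≤ T → ∀ i, d t i ∈ Set.Icc (0 : ℝ) 1)
    (hP : ∀ t, 1 ≤ t → t ≤ T → RowStochastic (P t))
    (x1 : Fin n → ℝ) (hx1 : x1 ∈ stdSimplex ℝ (Fin n))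
    (S g : ℕ → Fin n → ℝ)
    (hS1 : S 1 ∈ stdSimplex ℝ (Fin n))
    (hgbound : ∀ t, 1 ≤ t → t ≤ T → l2Norm (g t) ≤ (n : ℝ) ^ 2 * (cmax + lmax))
    (hsubgrad : ∀ t, 1 ≤ t → t ≤ T → ∀ y ∈ stdSimplex ℝ (Fin n),
      surr c l (d t) (P t) y
        ≥ surr c l (d t) (P t) (S t) + ∑ i, g t i * (y i - S t i))
    (hproj : ∀ t, 1 ≤ t → t ≤ T →
      S (t + 1) ∈ stdSimplex ℝ (Fin n) ∧
      ∀ z ∈ stdSimplex ℝ (Fin n),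
        l2Norm (fun i => S (t + 1) i
            - (S t i - (2 / ((n : ℝ) ^ 2 * (cmax + lmax) * Real.sqrt t)) * g t i))
          ≤ l2Norm (fun i => z i
            - (S t i - (2 / ((n : ℝ) ^ 2 * (cmax + lmax) * Real.sqrt t)) * g t i)))
    (xalg : ℕ → Fin n → ℝ) (hxalg1 : xalg 1 = x1)
    (hxalg : ∀ t, 1 ≤ t → t ≤ T → ∀ i,
      xalg (t + 1) i = max (S t i - d t i) 0 + ∑ j, P t j i * min (S t j) (d t j))
    (Sstar : Fin n → ℝ) (hSstar : Sstar ∈ stdSimplex ℝ (Fin n))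
    (xs : ℕ → Fin n → ℝ) (hxs1 : xs 1 = x1)
    (hxs : ∀ t, 1 ≤ t → t ≤ T → ∀ i,
      xs (t + 1) i = max (Sstar i - d t i) 0 + ∑ j, P t j i * min (Sstar j) (d t j)) :
    (∑ t ∈ Finset.Icc 1 T, Ctilde c l (xalg t) (S t) (d t) (P t))
      - ∑ t ∈ Finset.Icc 1 T, Ctilde c l (xs t) Sstar (d t) (P t)
      ≤ 20 * (n : ℝ) ^ ((5 : ℝ) / 2) * (1 + cmax + lmax) ^ 2 * Real.sqrt T := by
  classical
  have hn0 : 0 < n := hn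
  have hnR : (1:ℝ) ≤ (n:ℝ) := by exact_mod_cast hn
  have hnR0 : (0:ℝ) < (n:ℝ) := by exact_mod_cast hn0
  obtain ⟨⟨ic, jc, hceq⟩, hcub⟩ := hcmax
  obtain ⟨⟨il, jl, hleq⟩, hlub⟩ := hlmax
  have hcm0 : 0 ≤ cmax := hceq ▸ hc ic jc
  have hlm0 : 0 ≤ lmax := hleq ▸ hl il jl
  have hcb : ∀ i j, c i j ≤ cmax := fun i j => hcub ⟨i, j, rfl⟩
  set G := (n:ℝ) ^ 2 * (cmax + lmax) with hGdef
  have hG : (0:ℝ) < G := mul_pos (pow_pos hnR0 2) hpos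
  have hSmem : ∀ t, 1 ≤ t → t ≤ T + 1 → S t ∈ stdSimplex ℝ (Fin n) := by
    intro t
    induction t with
    | zero => omega
    | succ t ih =>
      intro h1 h2
      rcases Nat.eq_zero_or_pos t with rfl | ht
      · exact hS1
      · exact (hproj t ht (by omega)).1
  have hsqrtpos : ∀ t : ℕ, 1 ≤ t → (0:ℝ) < Real.sqrt t := fun t ht =>
    Real.sqrt_pos.mpr (by exact_mod_cast Nat.lt_of_lt_of_le Nat.zero_lt_one ht)
  -- movement bound
  have hdiff : ∀ s, 1 ≤ s → s ≤ T →
      l2Norm (fun j => S (s+1) j - S s j) ≤ 4 / Real.sqrt s := by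
    intro s hs1 hsT
    have hst : (0:ℝ) < Real.sqrt s := hsqrtpos s hs1
    have hminS := (hproj s hs1 hsT).2 (S s) (hSmem s hs1 (by omega))
    set η := 2 / (G * Real.sqrt s) with hηdef
    have hη : 0 < η := div_pos two_pos (mul_pos hG hst)
    have he1 : (fun i => S s i - (S s i - η * g s i)) = fun i => η * g s i :=
      funext fun i => by ring
    have hgb := hgbound s hs1 hsT
    have hkey : l2Norm (fun j => S (s+1) j - S s j) ≤ 2 * η * l2Norm (g s) := by
      have hsplit : (fun j => S (s+1) j - S s j)
          = fun j => (S (s+1) j - (S s j - η * g s j)) + ((-η) * g s j) :=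
        funext fun j => by ring
      calc l2Norm (fun j => S (s+1) j - S s j)
          ≤ l2Norm (fun j => S (s+1) j - (S s j - η * g s j))
            + l2Norm (fun j => (-η) * g s j) := by
            rw [hsplit]; exact l2Norm_triangle _ _
        _ ≤ l2Norm (fun i => S s i - (S s i - η * g s i))
            + l2Norm (fun j => (-η) * g s j) := add_le_add_left hminS _
        _ = η * l2Norm (g s) + η * l2Norm (g s) := by
            rw [he1, l2Norm_smul, l2Norm_smul, abs_neg, abs_of_pos hη]
        _ = 2 * η * l2Norm (g s) := by ring
    calc l2Norm (fun j => S (s+1) j - S s j) ≤ 2 * η * l2Norm (g s) := hkey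
      _ ≤ 2 * η * G := by
          exact mul_le_mul_of_nonneg_left hgb (by positivity)
      _ = 4 / Real.sqrt s := by
          rw [hηdef]
          field_simp
          ring
  -- algorithm-side telescoping
  have hstepA : ∀ s, 1 ≤ s → s + 1 ≤ T →
      repoCost c (fun i => S (s+1) i - xalg (s+1) i)
        ≤ repoCost c (fun j => S (s+1) j - S s j)
          + repoCost c (fun j => min (S s j) (d s j)
              - ∑ i, P s i j * min (S s i) (d s i)) := by
    intro s hs1 hsT
    have hfun : (fun i => S (s+1) i - xalg (s+1) i)
        = fun j => (S (s+1) j - S s j)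
            + (min (S s j) (d s j) - ∑ i, P s i j * min (S s i) (d s i)) := by
      funext j
      rw [hxalg s hs1 (by omega) j]
      have h := sub_max_eq_min (S s j) (d s j)
      linarith [h]
    rw [hfun]
    exact repoCost_add_le c hc hn0 _ _
      (simplex_sub_sum_zero (hSmem (s+1) (by omega) (by omega)) (hSmem s hs1 (by omega)))
      (w_sum_zero (S s) (d s) (P s) (hP s hs1 (by omega)).2) cmax hcb
  have halg : ∑ t ∈ Finset.Icc 1 T,
      (repoCost c (fun i => S t i - xalg t i)
        - repoCost c (fun j => min (S t j) (d t j) - ∑ i, P t i j * min (S t i) (d t i)))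
      ≤ 2 * cmax + 8 * (cmax * Real.sqrt n) * Real.sqrt T := by
    have h1 := tele_le (fun t => repoCost c (fun i => S t i - xalg t i))
      (fun t => repoCost c (fun j => min (S t j) (d t j) - ∑ i, P t i j * min (S t i) (d t i)))
      (fun s => repoCost c (fun j => S (s+1) j - S s j)) T hstepA T hT le_rfl
    have hRA1 : repoCost c (fun i => S 1 i - xalg 1 i) ≤ 2 * cmax := by
      rw [hxalg1]
      calc repoCost c (fun i => S 1 i - x1 i) ≤ cmax * ∑ i, |S 1 i - x1 i| :=
            repoCost_le_l1 c hc hn0 _ (simplex_sub_sum_zero hS1 hx1) cmax hcb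
        _ ≤ cmax * 2 := mul_le_mul_of_nonneg_left (simplex_abs_sub_le_two hS1 hx1) hcm0
        _ = 2 * cmax := by ring
    have hRWT : 0 ≤ repoCost c (fun j => min (S T j) (d T j)
        - ∑ i, P T i j * min (S T i) (d T i)) := repoCost_nonneg c hc _
    have hB : ∑ s ∈ Finset.Icc 1 (T-1), repoCost c (fun j => S (s+1) j - S s j)
        ≤ 8 * (cmax * Real.sqrt n) * Real.sqrt T := by
      have hstep2 : ∀ s ∈ Finset.Icc 1 (T-1),
          repoCost c (fun j => S (s+1) j - S s j)
            ≤ cmax * Real.sqrt n * (4 / Real.sqrt s) := by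
        intro s hs
        rw [Finset.mem_Icc] at hs
        have hs1 : 1 ≤ s := hs.1
        have hsT : s ≤ T := by omega
        calc repoCost c (fun j => S (s+1) j - S s j)
            ≤ cmax * ∑ j, |S (s+1) j - S s j| :=
              repoCost_le_l1 c hc hn0 _
                (simplex_sub_sum_zero (hSmem (s+1) (by omega) (by omega))
                  (hSmem s (by omega) (by omega))) cmax hcb
          _ ≤ cmax * (Real.sqrt n * l2Norm (fun j => S (s+1) j - S s j)) :=
              mul_le_mul_of_nonneg_left (l1_le_sqrt_l2 _) hcm0
          _ ≤ cmax * (Real.sqrt n * (4 / Real.sqrt s)) :=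
              mul_le_mul_of_nonneg_left
                (mul_le_mul_of_nonneg_left (hdiff s hs1 hsT) (Real.sqrt_nonneg _)) hcm0
          _ = cmax * Real.sqrt n * (4 / Real.sqrt s) := by ring
      calc ∑ s ∈ Finset.Icc 1 (T-1), repoCost c (fun j => S (s+1) j - S s j)
          ≤ ∑ s ∈ Finset.Icc 1 (T-1), cmax * Real.sqrt n * (4 / Real.sqrt s) :=
            Finset.sum_le_sum hstep2
        _ = 4 * (cmax * Real.sqrt n) * ∑ s ∈ Finset.Icc 1 (T-1), 1 / Real.sqrt s := by
            rw [Finset.mul_sum]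
            exact Finset.sum_congr rfl fun s _ => by ring
        _ ≤ 4 * (cmax * Real.sqrt n) * (2 * Real.sqrt ((T-1 : ℕ))) := by
            refine mul_le_mul_of_nonneg_left (sqrt_sum_le (T-1)) ?_
            exact mul_nonneg (by norm_num) (mul_nonneg hcm0 (Real.sqrt_nonneg _))
        _ = 8 * (cmax * Real.sqrt n) * Real.sqrt ((T-1 : ℕ)) := by ring
        _ ≤ 8 * (cmax * Real.sqrt n) * Real.sqrt T := by
            refine mul_le_mul_of_nonneg_left
              (Real.sqrt_le_sqrt (by exact_mod_cast Nat.sub_le T 1)) ?_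
            exact mul_nonneg (by norm_num) (mul_nonneg hcm0 (Real.sqrt_nonneg _))
    calc ∑ t ∈ Finset.Icc 1 T,
        (repoCost c (fun i => S t i - xalg t i)
          - repoCost c (fun j => min (S t j) (d t j) - ∑ i, P t i j * min (S t i) (d t i)))
        ≤ repoCost c (fun i => S 1 i - xalg 1 i)
            - repoCost c (fun j => min (S T j) (d T j) - ∑ i, P T i j * min (S T i) (d T i))
            + ∑ s ∈ Finset.Icc 1 (T-1), repoCost c (fun j => S (s+1) j - S s j) := h1
      _ ≤ 2 * cmax + 8 * (cmax * Real.sqrt n) * Real.sqrt T := by linarith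
  -- comparator-side telescoping (equality)
  have hstepS : ∀ s, 1 ≤ s → s + 1 ≤ T →
      repoCost c (fun i => Sstar i - xs (s+1) i)
        = repoCost c (fun j => min (Sstar j) (d s j)
            - ∑ i, P s i j * min (Sstar i) (d s i)) := by
    intro s hs1 hsT
    congr 1
    funext j
    rw [hxs s hs1 (by omega) j]
    linarith [sub_max_eq_min (Sstar j) (d s j)]
  have hcomp := tele_eq (fun t => repoCost c (fun i => Sstar i - xs t i))
      (fun t => repoCost c (fun j => min (Sstar j) (d t j)
        - ∑ i, P t i j * min (Sstar i) (d t i))) T hstepS T hT le_rfl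
  have hcompLB : -(2 * cmax) ≤ ∑ t ∈ Finset.Icc 1 T,
      (repoCost c (fun i => Sstar i - xs t i)
        - repoCost c (fun j => min (Sstar j) (d t j)
            - ∑ i, P t i j * min (Sstar i) (d t i))) := by
    have hws : repoCost c (fun j => min (Sstar j) (d T j)
        - ∑ i, P T i j * min (Sstar i) (d T i)) ≤ 2 * cmax := by
      calc repoCost c (fun j => min (Sstar j) (d T j) - ∑ i, P T i j * min (Sstar i) (d T i))
          ≤ cmax * ∑ j, |min (Sstar j) (d T j) - ∑ i, P T i j * min (Sstar i) (d T i)| :=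
            repoCost_le_l1 c hc hn0 _
              (w_sum_zero Sstar (d T) (P T) (hP T hT le_rfl).2) cmax hcb
        _ ≤ cmax * 2 := mul_le_mul_of_nonneg_left
            (w_abs_le_two hSstar (fun i => (hd T hT le_rfl i).1)
              (fun i j => ((hP T hT le_rfl).1 i j).1) (hP T hT le_rfl).2) hcm0
        _ = 2 * cmax := by ring
    have hRA1 : 0 ≤ repoCost c (fun i => Sstar i - xs 1 i) := repoCost_nonneg c hc _
    calc -(2 * cmax)
        ≤ repoCost c (fun i => Sstar i - xs 1 i)
          - repoCost c (fun j => min (Sstar j) (d T j)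
              - ∑ i, P T i j * min (Sstar i) (d T i)) := by linarith
      _ = ∑ t ∈ Finset.Icc 1 T,
          (repoCost c (fun i => Sstar i - xs t i)
            - repoCost c (fun j => min (Sstar j) (d t j)
                - ∑ i, P t i j * min (Sstar i) (d t i))) := hcomp.symm
  -- OGD per-step bound
  have hstepOGD : ∀ t, 1 ≤ t → t ≤ T →
      ∑ i, g t i * (S t i - Sstar i)
        ≤ (G * Real.sqrt t / 4) * ((∑ i, (S t i - Sstar i) ^ 2)
            - (∑ i, (S (t+1) i - Sstar i) ^ 2)) + G / Real.sqrt t := by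
    intro t ht1 htT
    have hst : (0:ℝ) < Real.sqrt t := hsqrtpos t ht1
    have hr : (0:ℝ) < G * Real.sqrt t := mul_pos hG hst
    have hcontr := proj_contract (fun i => S t i - (2 / (G * Real.sqrt t)) * g t i)
      (S (t+1)) Sstar (hSmem (t+1) (by omega) (by omega)) hSstar ((hproj t ht1 htT).2)
    have h : ∀ i, ((S t i - (2 / (G * Real.sqrt t)) * g t i) - Sstar i) ^ 2
        = (S t i - Sstar i) ^ 2
          - 2 * (2 / (G * Real.sqrt t)) * (g t i * (S t i - Sstar i))
          + (2 / (G * Real.sqrt t)) ^ 2 * (g t i) ^ 2 := fun i => by ring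
    have hexp : ∑ i, ((S t i - (2 / (G * Real.sqrt t)) * g t i) - Sstar i) ^ 2
        = (∑ i, (S t i - Sstar i) ^ 2)
          - 2 * (2 / (G * Real.sqrt t)) * (∑ i, g t i * (S t i - Sstar i))
          + (2 / (G * Real.sqrt t)) ^ 2 * (∑ i, (g t i) ^ 2) := by
      rw [Finset.sum_congr rfl fun i _ => h i, Finset.sum_add_distrib,
        Finset.sum_sub_distrib, ← Finset.mul_sum, ← Finset.mul_sum]
    rw [hexp] at hcontr
    have hY : ∑ i, (g t i) ^ 2 ≤ G ^ 2 := by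
      have hgb := hgbound t ht1 htT
      have h0 := l2Norm_nonneg (g t)
      calc ∑ i, (g t i) ^ 2 = (l2Norm (g t)) ^ 2 := (l2Norm_sq _).symm
        _ ≤ G ^ 2 := by nlinarith
    have hY0 : (0:ℝ) ≤ ∑ i, (g t i) ^ 2 := Finset.sum_nonneg fun i _ => sq_nonneg _
    set X := ∑ i, g t i * (S t i - Sstar i) with hXdef
    set D1 := ∑ i, (S t i - Sstar i) ^ 2 with hD1def
    set D2 := ∑ i, (S (t+1) i - Sstar i) ^ 2 with hD2def
    set Y := ∑ i, (g t i) ^ 2 with hYdef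
    -- hcontr : D2 ≤ D1 - 2*(2/(G√t))*X + (2/(G√t))^2 * Y
    have hm := mul_le_mul_of_nonneg_left hcontr
      (le_of_lt (by positivity : (0:ℝ) < G * Real.sqrt t / 4))
    have hexp2 : (G * Real.sqrt t / 4)
        * (D1 - 2 * (2 / (G * Real.sqrt t)) * X + (2 / (G * Real.sqrt t)) ^ 2 * Y)
        = (G * Real.sqrt t / 4) * D1 - X + Y / (G * Real.sqrt t) := by
      field_simp
      ring
    rw [hexp2] at hm
    have hdivY : Y / (G * Real.sqrt t) ≤ G ^ 2 / (G * Real.sqrt t) :=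
      div_le_div_of_nonneg_right hY hr.le
    have hGid : G ^ 2 / (G * Real.sqrt t) = G / Real.sqrt t := by
      rw [pow_two]
      field_simp
    have hring : (G * Real.sqrt t / 4) * (D1 - D2)
        = (G * Real.sqrt t / 4) * D1 - (G * Real.sqrt t / 4) * D2 := by ring
    linarith [hm, hdivY, hGid ▸ hdivY]
  -- OGD summation
  have hOGD1 : ∑ t ∈ Finset.Icc 1 T,
      (G * Real.sqrt t / 4) * ((∑ i, (S t i - Sstar i) ^ 2)
        - (∑ i, (S (t+1) i - Sstar i) ^ 2)) ≤ G * Real.sqrt T / 2 := by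
    set a : ℕ → ℝ := fun t => if 1 ≤ t ∧ t ≤ T + 1 then ∑ i, (S t i - Sstar i) ^ 2 else 0
      with hadef
    set b : ℕ → ℝ := fun t => G * Real.sqrt t / 4 with hbdef
    have hb0 : ∀ t, 0 ≤ b t := fun t => by
      simp only [hbdef]; positivity
    have hbm : ∀ t, b t ≤ b (t + 1) := fun t => by
      simp only [hbdef]
      have hmono : Real.sqrt t ≤ Real.sqrt ((t+1 : ℕ)) :=
        Real.sqrt_le_sqrt (by push_cast; linarith)
      have := mul_le_mul_of_nonneg_left hmono hG.le
      linarith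
    have ha0 : ∀ t, 0 ≤ a t := fun t => by
      simp only [hadef]
      split
      · exact Finset.sum_nonneg fun i _ => sq_nonneg _
      · exact le_refl 0
    have ha2 : ∀ t, a t ≤ 2 := fun t => by
      simp only [hadef]
      split
      · next hcond => exact simplex_sq_sub_le_two (hSmem t hcond.1 hcond.2) hSstar
      · norm_num
    have habel := abel_sum b a hb0 hbm ha0 ha2 T hT
    have hcong : ∑ t ∈ Finset.Icc 1 T, b t * (a t - a (t + 1))
        = ∑ t ∈ Finset.Icc 1 T, (G * Real.sqrt t / 4) * ((∑ i, (S t i - Sstar i) ^ 2)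
            - (∑ i, (S (t+1) i - Sstar i) ^ 2)) := by
      refine Finset.sum_congr rfl fun t ht => ?_
      rw [Finset.mem_Icc] at ht
      simp only [hadef, hbdef]
      rw [if_pos ⟨ht.1, by omega⟩, if_pos (by omega : 1 ≤ t + 1 ∧ t + 1 ≤ T + 1)]
    have hba : 0 ≤ b T * a (T + 1) := mul_nonneg (hb0 T) (ha0 (T + 1))
    have hbT : b T = G * Real.sqrt T / 4 := rfl
    rw [← hcong]
    linarith [habel]
  have hOGD2 : ∑ t ∈ Finset.Icc 1 T, G / Real.sqrt t ≤ 2 * G * Real.sqrt T := by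
    calc ∑ t ∈ Finset.Icc 1 T, G / Real.sqrt t
        = G * ∑ t ∈ Finset.Icc 1 T, 1 / Real.sqrt t := by
          rw [Finset.mul_sum]
          exact Finset.sum_congr rfl fun t _ => by ring
      _ ≤ G * (2 * Real.sqrt T) := mul_le_mul_of_nonneg_left (sqrt_sum_le T) hG.le
      _ = 2 * G * Real.sqrt T := by ring
  have hsurr : ∑ t ∈ Finset.Icc 1 T,
      (surr c l (d t) (P t) (S t) - surr c l (d t) (P t) Sstar)
      ≤ G * Real.sqrt T / 2 + 2 * G * Real.sqrt T := by
    calc ∑ t ∈ Finset.Icc 1 T, (surr c l (d t) (P t) (S t) - surr c l (d t) (P t) Sstar)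
        ≤ ∑ t ∈ Finset.Icc 1 T, ∑ i, g t i * (S t i - Sstar i) := by
          refine Finset.sum_le_sum fun t ht => ?_
          rw [Finset.mem_Icc] at ht
          have h := hsubgrad t ht.1 ht.2 Sstar hSstar
          have e : ∑ i, g t i * (S t i - Sstar i) = - ∑ i, g t i * (Sstar i - S t i) := by
            rw [← Finset.sum_neg_distrib]
            exact Finset.sum_congr rfl fun i _ => by ring
          linarith [h, e]
      _ ≤ ∑ t ∈ Finset.Icc 1 T,
          ((G * Real.sqrt t / 4) * ((∑ i, (S t i - Sstar i) ^ 2)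
            - (∑ i, (S (t+1) i - Sstar i) ^ 2)) + G / Real.sqrt t) := by
          refine Finset.sum_le_sum fun t ht => ?_
          rw [Finset.mem_Icc] at ht
          exact hstepOGD t ht.1 ht.2
      _ = (∑ t ∈ Finset.Icc 1 T, (G * Real.sqrt t / 4) * ((∑ i, (S t i - Sstar i) ^ 2)
            - (∑ i, (S (t+1) i - Sstar i) ^ 2)))
          + ∑ t ∈ Finset.Icc 1 T, G / Real.sqrt t := Finset.sum_add_distrib
      _ ≤ G * Real.sqrt T / 2 + 2 * G * Real.sqrt T := add_le_add hOGD1 hOGD2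
  -- decomposition of the sums
  have hsplitA : ∑ t ∈ Finset.Icc 1 T, Ctilde c l (xalg t) (S t) (d t) (P t)
      = (∑ t ∈ Finset.Icc 1 T, surr c l (d t) (P t) (S t))
        + ∑ t ∈ Finset.Icc 1 T,
            (repoCost c (fun i => S t i - xalg t i)
              - repoCost c (fun j => min (S t j) (d t j)
                  - ∑ i, P t i j * min (S t i) (d t i))) := by
    rw [← Finset.sum_add_distrib]
    refine Finset.sum_congr rfl fun t _ => ?_
    simp only [Ctilde, surr]
    ring
  have hsplitS : ∑ t ∈ Finset.Icc 1 T, Ctilde c l (xs t) Sstar (d t) (P t)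
      = (∑ t ∈ Finset.Icc 1 T, surr c l (d t) (P t) Sstar)
        + ∑ t ∈ Finset.Icc 1 T,
            (repoCost c (fun i => Sstar i - xs t i)
              - repoCost c (fun j => min (Sstar j) (d t j)
                  - ∑ i, P t i j * min (Sstar i) (d t i))) := by
    rw [← Finset.sum_add_distrib]
    refine Finset.sum_congr rfl fun t _ => ?_
    simp only [Ctilde, surr]
    ring
  have hsurrsub : (∑ t ∈ Finset.Icc 1 T, surr c l (d t) (P t) (S t))
      - (∑ t ∈ Finset.Icc 1 T, surr c l (d t) (P t) Sstar)
      = ∑ t ∈ Finset.Icc 1 T,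
          (surr c l (d t) (P t) (S t) - surr c l (d t) (P t) Sstar) :=
    by rw [Finset.sum_sub_distrib]
  rw [hsplitA, hsplitS]
  -- final numeric bound
  set N := (n:ℝ) ^ ((5:ℝ)/2) with hNdef
  have hN1 : (1:ℝ) ≤ N := by
    rw [hNdef]
    calc (1:ℝ) = (n:ℝ) ^ (0:ℝ) := (Real.rpow_zero _).symm
      _ ≤ (n:ℝ) ^ ((5:ℝ)/2) := Real.rpow_le_rpow_of_exponent_le hnR (by norm_num)
  have hn2N : (n:ℝ) ^ 2 ≤ N := by
    rw [hNdef]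
    calc (n:ℝ) ^ 2 = (n:ℝ) ^ ((2:ℕ) : ℝ) := (Real.rpow_natCast _ 2).symm
      _ ≤ (n:ℝ) ^ ((5:ℝ)/2) := Real.rpow_le_rpow_of_exponent_le hnR (by norm_num)
  have hsqN : Real.sqrt n ≤ N := by
    rw [hNdef, Real.sqrt_eq_rpow]
    exact Real.rpow_le_rpow_of_exponent_le hnR (by norm_num)
  set M := 1 + cmax + lmax with hMdef
  have hMe : M ^ 2 = 1 + 2 * (cmax + lmax) + (cmax + lmax) ^ 2 := by rw [hMdef]; ring
  have hM2 : cmax + lmax ≤ M ^ 2 := by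
    linarith only [hMe, hpos, sq_nonneg (cmax + lmax)]
  have hM1 : (1:ℝ) ≤ M ^ 2 := by
    linarith only [hMe, hpos, sq_nonneg (cmax + lmax)]
  have hcM : cmax ≤ M ^ 2 := by linarith only [hM2, hlm0]
  have hT1 : (1:ℝ) ≤ Real.sqrt T := by
    rw [← Real.sqrt_one]
    exact Real.sqrt_le_sqrt (by exact_mod_cast hT)
  have hsT0 : (0:ℝ) ≤ Real.sqrt T := Real.sqrt_nonneg _
  have hN0 : (0:ℝ) ≤ N := by linarith
  have hM20 : (0:ℝ) ≤ M ^ 2 := sq_nonneg _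
  have p1 : G * Real.sqrt T ≤ N * M ^ 2 * Real.sqrt T := by
    refine mul_le_mul_of_nonneg_right ?_ hsT0
    calc G = (n:ℝ) ^ 2 * (cmax + lmax) := hGdef
      _ ≤ N * M ^ 2 := mul_le_mul hn2N hM2 hpos.le hN0
  have p2 : cmax * Real.sqrt n * Real.sqrt T ≤ N * M ^ 2 * Real.sqrt T := by
    refine mul_le_mul_of_nonneg_right ?_ hsT0
    calc cmax * Real.sqrt n ≤ M ^ 2 * N :=
          mul_le_mul hcM hsqN (Real.sqrt_nonneg _) hM20
      _ = N * M ^ 2 := by ring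
  have p3 : cmax ≤ N * M ^ 2 * Real.sqrt T := by
    calc cmax ≤ M ^ 2 := hcM
      _ = M ^ 2 * 1 * 1 := by ring
      _ ≤ M ^ 2 * N * Real.sqrt T := by
          refine mul_le_mul (mul_le_mul le_rfl hN1 (by norm_num) hM20) hT1 (by norm_num) ?_
          exact mul_nonneg hM20 hN0
      _ = N * M ^ 2 * Real.sqrt T := by ring
  have hfinal : G * Real.sqrt T / 2 + 2 * G * Real.sqrt T
      + (2 * cmax + 8 * (cmax * Real.sqrt n) * Real.sqrt T) + 2 * cmax
      ≤ 20 * N * M ^ 2 * Real.sqrt T := by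
    have h8 : 8 * (cmax * Real.sqrt n) * Real.sqrt T
        = 8 * (cmax * Real.sqrt n * Real.sqrt T) := by ring
    have hX0 : (0:ℝ) ≤ N * M ^ 2 * Real.sqrt T :=
      mul_nonneg (mul_nonneg hN0 hM20) hsT0
    have h20 : 20 * N * M ^ 2 * Real.sqrt T = 20 * (N * M ^ 2 * Real.sqrt T) := by ring
    clear_value G N M
    linarith only [p1, p2, p3, hX0, h8, h20]
  clear_value G N M
  linarith only [hsurr, halg, hcompLB, hsurrsub, hfinal]
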